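/- Let κ > 1, 0 < θ < 1/3, u ∈ ℝ with |u| ≤ κ^θ, and ν = 2κ(1 − iu/κ). Then | 2κ e^{−iu/κ} ∫₀^∞ e^{−y² − νy} dy − ( 1 − (u² + 1)/(2κ²) ) | ≤ C_{κ,θ}(u)/κ³, where C_{κ,θ}(u) = C₁ + C₄₁·|u| + C₄₂·|u|³. -/

import Mathlib

open Real MeasureTheory
open Filter Set Topology

/-- The constant `C₁(κ,θ)`. -/
noncomputable def C1 (κ θ : ℝ) : ℝ :=
  (1 / 8) * (2 * Real.sqrt Real.pi * Real.sqrt (1 + κ ^ (2 * θ - 2)) / Real.exp 1 +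
    (6 / κ) * (1 + Real.sqrt (1 + κ ^ (2 * θ - 2)) / Real.exp 1) + 3 / κ ^ (3 : ℕ))

/-- The constant `C₂(κ,θ)`. -/
noncomputable def C2 (κ θ : ℝ) : ℝ :=
  (1 / (1 - κ ^ (θ - 1))) * (1 / (1 - κ ^ (θ - 1) / 4) + 5 / 2)

/-- The constant `C₃(κ,θ)`. -/
noncomputable def C3 (κ θ : ℝ) : ℝ := Real.sqrt (1 + κ ^ (2 * θ - 2) / 4)

/-- The constant `C₄₁(κ,θ)`. -/
noncomputable def C41 (κ θ : ℝ) : ℝ :=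
  C3 κ θ + κ ^ (3 * θ - 3) * C2 κ θ * C3 κ θ + κ ^ (θ - 1) / 4

/-- The constant `C₄₂(κ,θ)`. -/
noncomputable def C42 (κ θ : ℝ) : ℝ := C2 κ θ * (1 - 1 / (2 * κ ^ (2 : ℕ)))

/-- The function `C_{κ,θ}(u) = C₁ + C₄₁|u| + C₄₂|u|³`. -/
noncomputable def Cfun (κ θ u : ℝ) : ℝ := C1 κ θ + C41 κ θ * |u| + C42 κ θ * |u| ^ (3 : ℕ)

lemma expq {t : ℝ} (ht : 0 ≤ t) : Real.exp (-t) ≤ 1 - t + t^2/2 := by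
  have key : ∀ s ∈ Set.Ici (0:ℝ), 1 ≤ (1 - s + s^2/2) * Real.exp s := by
    have hmono : MonotoneOn (fun s : ℝ => (1 - s + s^2/2) * Real.exp s) (Set.Ici 0) := by
      have hd : ∀ s : ℝ, HasDerivAt (fun s : ℝ => (1 - s + s^2/2) * Real.exp s)
          (s^2/2 * Real.exp s) s := by
        intro s
        have h1 : HasDerivAt (fun s : ℝ => 1 - s + s^2/2) (-1 + s) s := by
          have := ((hasDerivAt_id s).pow 2).div_const 2
          have h2 := ((hasDerivAt_const s (1:ℝ)).sub (hasDerivAt_id s)).add this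
          refine h2.congr_deriv ?_
          norm_num
        have := h1.mul (Real.hasDerivAt_exp s)
        exact this.congr_deriv (by ring)
      apply monotoneOn_of_deriv_nonneg (convex_Ici 0)
      · exact (Continuous.mul (by continuity) Real.continuous_exp).continuousOn
      · intro s _; exact (hd s).differentiableAt.differentiableWithinAt
      · intro s hs
        rw [(hd s).deriv]
        positivity
    intro s hs
    have := hmono (Set.self_mem_Ici) hs hs.out
    simpa using this
  have h := key t ht
  have he : 0 < Real.exp t := Real.exp_pos t
  rw [Real.exp_neg, inv_le_iff_one_le_mul₀ he]
  linarith [h]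

lemma tendsto_pme (k : ℕ) {c : ℝ} (hc : 0 < c) :
    Tendsto (fun y : ℝ => y^k * Real.exp (-c*y)) atTop (𝓝 0) := by
  have h1 := (Real.tendsto_pow_mul_exp_neg_atTop_nhds_zero k).comp
    (tendsto_id.const_mul_atTop hc)
  have h2 := h1.const_mul ((1/c)^k)
  rw [mul_zero] at h2
  refine h2.congr fun y => ?_
  simp only [Function.comp_apply, id_eq]
  rw [mul_pow]
  field_simp
  ring_nf
  rw [← mul_pow, mul_inv_cancel₀ hc.ne', one_pow, one_mul]

lemma tendsto_cpme (ν : ℂ) (hν : 0 < ν.re) (k : ℕ) :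
    Tendsto (fun y : ℝ => (y:ℂ)^k * Complex.exp (-(ν*y))) atTop (𝓝 0) := by
  apply squeeze_zero_norm' (a := fun y : ℝ => y^k * Real.exp (-ν.re*y))
  · filter_upwards [eventually_ge_atTop (0:ℝ)] with y hy
    rw [norm_mul, norm_pow, Complex.norm_real, Real.norm_eq_abs,
      Complex.norm_exp]
    have : (-(ν * y)).re = -ν.re * y := by simp
    rw [this, abs_of_nonneg hy]
  · exact tendsto_pme k hν

lemma integrableOn_pme (k : ℕ) {c : ℝ} (hc : 0 < c) :
    IntegrableOn (fun y : ℝ => y^k * Real.exp (-c*y)) (Ioi 0) := by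
  apply integrable_of_isBigO_exp_neg (half_pos hc) (by fun_prop)
  have h : Tendsto (fun y : ℝ => y^k * Real.exp (-(c/2)*y)) atTop (𝓝 0) :=
    tendsto_pme k (half_pos hc)
  have hO := h.isBigO_one ℝ
  calc (fun y : ℝ => y^k * Real.exp (-c*y))
      = fun y : ℝ => (y^k * Real.exp (-(c/2)*y)) * Real.exp (-(c/2)*y) := by
        funext y; rw [mul_assoc, ← Real.exp_add]; ring_nf
    _ =O[atTop] fun y : ℝ => 1 * Real.exp (-(c/2)*y) :=
        hO.mul (Asymptotics.isBigO_refl _ _)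
    _ = fun y : ℝ => Real.exp (-(c/2)*y) := by funext y; rw [one_mul]

lemma integrableOn_cpme (ν : ℂ) (hν : 0 < ν.re) (k : ℕ) :
    IntegrableOn (fun y : ℝ => (y:ℂ)^k * Complex.exp (-(ν*y))) (Ioi 0) := by
  apply Integrable.mono' (integrableOn_pme k hν)
  · exact (Continuous.aestronglyMeasurable (by fun_prop)).restrict
  · filter_upwards [ae_restrict_mem measurableSet_Ioi] with y hy
    rw [norm_mul, norm_pow, Complex.norm_real, Real.norm_eq_abs,
      Complex.norm_exp]
    have : (-(ν * y)).re = -ν.re * y := by simp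
    rw [this, abs_of_nonneg (le_of_lt hy)]

lemma hasDerivAt_cexp_neg (ν : ℂ) (y : ℝ) :
    HasDerivAt (fun t : ℝ => Complex.exp (-(ν*t))) (-ν * Complex.exp (-(ν*y))) y := by
  have hid : HasDerivAt (fun t : ℝ => (t:ℂ)) 1 y := by
    exact Complex.ofRealCLM.hasDerivAt (x := y)
  have h1 : HasDerivAt (fun t : ℝ => -(ν*(t:ℂ))) (-ν) y := by
    exact (hid.const_mul ν).neg.congr_deriv (by ring)
  simpa [mul_comm] using h1.cexp

lemma lap0 (ν : ℂ) (hν : 0 < ν.re) :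
    ∫ y in Ioi (0:ℝ), Complex.exp (-(ν*y)) = 1/ν := by
  have hν0 : ν ≠ 0 := fun h => by simp [h] at hν
  have key := integral_Ioi_of_hasDerivAt_of_tendsto'
    (f := fun t : ℝ => -(Complex.exp (-(ν*t))/ν))
    (f' := fun t : ℝ => Complex.exp (-(ν*t))) (a := 0) (m := 0)
    (fun y _ => by
      have := ((hasDerivAt_cexp_neg ν y).div_const ν).neg
      refine this.congr_deriv ?_
      field_simp)
    (by simpa using integrableOn_cpme ν hν 0)
    (by
      have := ((tendsto_cpme ν hν 0).div_const ν).neg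
      simpa using this)
  rw [key]
  simp

lemma lap2 (ν : ℂ) (hν : 0 < ν.re) :
    ∫ y in Ioi (0:ℝ), (y:ℂ)^2 * Complex.exp (-(ν*y)) = 2/ν^3 := by
  have hν0 : ν ≠ 0 := fun h => by simp [h] at hν
  have key := integral_Ioi_of_hasDerivAt_of_tendsto'
    (f := fun t : ℝ => -(Complex.exp (-(ν*t)) * ((t:ℂ)^2/ν + 2*t/ν^2 + 2/ν^3)))
    (f' := fun t : ℝ => (t:ℂ)^2 * Complex.exp (-(ν*t))) (a := 0) (m := 0)
    (fun y _ => by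
      have hid : HasDerivAt (fun t : ℝ => (t:ℂ)) 1 y := by
        exact Complex.ofRealCLM.hasDerivAt (x := y)
      have hpoly : HasDerivAt (fun t : ℝ => ((t:ℂ)^2/ν + 2*t/ν^2 + 2/ν^3))
          (2*(y:ℂ)/ν + 2/ν^2) y := by
        have ha : HasDerivAt (fun t : ℝ => (t:ℂ)^2/ν) (2*(y:ℂ)/ν) y := by
          have := (hid.mul hid).div_const ν
          exact (this.congr_deriv (by ring)).congr_of_eventuallyEq (Filter.Eventually.of_forall fun t => by show (t:ℂ)^2/ν = (t:ℂ)*t/ν; ring)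
        have hb : HasDerivAt (fun t : ℝ => 2*(t:ℂ)/ν^2) (2/ν^2) y := by
          have := (hid.const_mul (2:ℂ)).div_const (ν^2)
          exact this.congr_deriv (by ring)
        have h2 := (ha.add hb).add (hasDerivAt_const y ((2:ℂ)/ν^3))
        exact h2.congr_deriv (by ring)
      have := ((hasDerivAt_cexp_neg ν y).mul hpoly).neg
      refine this.congr_deriv ?_
      field_simp [hν0]
      ring)
    (by
      apply Integrable.congr (integrableOn_cpme ν hν 2)
      filter_upwards [] with y
      rfl)
    (by
      have h0 := tendsto_cpme ν hν 0
      have h1 := tendsto_cpme ν hν 1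
      have h2 := tendsto_cpme ν hν 2
      have := (((h2.div_const ν).add ((h1.const_mul 2).div_const (ν^2))).add
        ((h0.const_mul 2).div_const (ν^3))).neg
      simp only [zero_div, add_zero, mul_zero, zero_add, neg_zero] at this
      refine this.congr fun y => ?_
      push_cast
      ring)
  rw [key]
  simp

-- imaginary part bound: (-3x + x³ + sin x)² ≤ 4x² for |x| ≤ 1
lemma im_bound {x : ℝ} (hx : |x| ≤ 1) : (-3*x + x^3 + Real.sin x)^2 ≤ 4*x^2 := by
  have key : ∀ t : ℝ, 0 ≤ t → t ≤ 1 → -(2*t) ≤ -3*t + t^3 + Real.sin t ∧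
      -3*t + t^3 + Real.sin t ≤ 2*t := by
    intro t ht0 ht1
    rcases eq_or_lt_of_le ht0 with h | h
    · constructor <;> simp [← h]
    have ht3 : t^3 ≤ t := by nlinarith [mul_nonneg (mul_nonneg ht0 (sub_nonneg.2 ht1)) (by linarith : (0:ℝ) ≤ 1 + t)]
    have ht3' : 0 ≤ t^3 := pow_nonneg ht0 3
    constructor
    · have := Real.sin_gt_sub_cube h
      linarith
    · have := Real.sin_lt h
      linarith
  rcases le_or_gt 0 x with h | h
  · have := key x h (by rwa [abs_of_nonneg h] at hx)
    nlinarith [this.1, this.2]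
  · have hx' : |(-x)| ≤ 1 := by rwa [abs_neg]
    have := key (-x) (by linarith) (by rwa [abs_of_nonneg (by linarith : (0:ℝ) ≤ -x)] at hx')
    rw [Real.sin_neg] at this
    nlinarith [this.1, this.2]

-- real part bound
lemma re_bound (x : ℝ) : (1 - 3*x^2 - Real.cos x)^2 ≤ 9*x^4 := by
  have h1 : Real.cos x ≤ 1 := Real.cos_le_one x
  have h2 : 1 - x^2/2 ≤ Real.cos x := Real.one_sub_sq_div_two_le_cos
  nlinarith

-- the combined bound for numerator of B
lemma N_bound {x : ℝ} (hx : |x| ≤ 1) :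
    (1 - 3*x^2 - Real.cos x)^2 + (-3*x + x^3 + Real.sin x)^2 ≤ 4*x^2*(1+x^2)^3 := by
  have h1 := re_bound x
  have h2 := im_bound hx
  nlinarith [sq_nonneg x, sq_nonneg (x^2)]

-- value of ∫ y^4 exp(-c y)
lemma int_pow4 {c : ℝ} (hc : 0 < c) :
    ∫ y in Ioi (0:ℝ), y^4 * Real.exp (-(c*y)) = 24 / c^5 := by
  have h := Real.integral_rpow_mul_exp_neg_mul_Ioi (a := 5) (r := c) (by norm_num) hc
  rw [show ((5:ℝ) - 1) = ((4:ℕ):ℝ) by norm_num] at h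
  have h2 : ∫ y in Ioi (0:ℝ), y^4 * Real.exp (-(c*y))
      = ∫ t in Ioi (0:ℝ), t ^ ((4:ℕ):ℝ) * Real.exp (-(c*t)) := by
    refine setIntegral_congr_fun measurableSet_Ioi fun y hy => ?_
    rw [Real.rpow_natCast]
  rw [h2, h]
  rw [show (5:ℝ) = ((4:ℕ):ℝ)+1 by norm_num, Real.Gamma_nat_eq_factorial]
  rw [show (((4:ℕ):ℝ)+1) = ((5:ℕ):ℝ) by norm_num, Real.rpow_natCast]
  norm_num [Nat.factorial]
  ring

set_option maxHeartbeats 1000000 in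
/-- For `κ > 1`, `0 < θ < 1/3`, `|u| ≤ κ^θ` and `ν = 2κ(1 − iu/κ)`,
`|2κ e^{−iu/κ} ∫₀^∞ e^{−y²−νy} dy − (1 − (u² + 1)/(2κ²))| ≤ C_{κ,θ}(u)/κ³`. -/
theorem inner_factor_approx (κ θ u : ℝ) (hκ : 1 < κ) (hθ0 : 0 < θ) (hθ1 : θ < 1 / 3)
    (hu : |u| ≤ κ ^ θ) (ν : ℂ) (hν : ν = 2 * (κ : ℂ) * (1 - Complex.I * u / κ)) :
    ‖(2 * (κ : ℂ)) * Complex.exp (-(Complex.I * u) / κ) *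
        (∫ y in Set.Ioi (0 : ℝ), Complex.exp (-(y : ℂ) ^ 2 - ν * y)) -
        ((1 : ℂ) - ((u : ℂ) ^ 2 + 1) / (2 * (κ : ℂ) ^ 2))‖ ≤
      Cfun κ θ u / κ ^ (3 : ℕ) := by
  have hκ0 : (0:ℝ) < κ := lt_trans one_pos hκ
  have hκc : (κ:ℂ) ≠ 0 := by exact_mod_cast ne_of_gt hκ0
  set x : ℝ := u / κ with hxdef
  have hxc : ((x:ℝ):ℂ) = (u:ℂ)/(κ:ℂ) := by push_cast [hxdef]; ring
  have hu_c : (u:ℂ) = (κ:ℂ) * (x:ℂ) := by rw [hxc]; field_simp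
  -- |x| bounds
  have hxabs : |x| = |u|/κ := by rw [hxdef, abs_div, abs_of_pos hκ0]
  have hrp1 : κ ^ (θ-1) < 1 := Real.rpow_lt_one_of_one_lt_of_neg hκ (by linarith)
  have hrp0 : (0:ℝ) < κ ^ (θ-1) := Real.rpow_pos_of_pos hκ0 _
  have hxk : |x| ≤ κ ^ (θ-1) := by
    rw [hxabs, Real.rpow_sub hκ0, Real.rpow_one, div_le_div_iff₀ hκ0 hκ0]
    exact mul_le_mul_of_nonneg_right hu (le_of_lt hκ0)
  have hx1 : |x| ≤ 1 := le_trans hxk (le_of_lt hrp1)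
  -- z and ν facts
  set z : ℂ := 1 - Complex.I * (x:ℂ) with hzdef
  have hνx : ν = 2 * (κ:ℂ) * z := by rw [hν, hzdef, hxc]; ring
  have hz2 : Complex.normSq z = 1 + x^2 := by
    simp [hzdef, Complex.normSq_apply]
    ring
  have hazsq : ‖z‖^2 = 1 + x^2 := by rw [Complex.sq_norm, hz2]
  have haz1 : 1 ≤ ‖z‖ := by
    nlinarith [norm_nonneg z, sq_nonneg x]
  have hz0 : z ≠ 0 := by
    intro h
    rw [h] at hz2
    simp at hz2
    nlinarith [sq_nonneg x]
  have hν0 : ν ≠ 0 := by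
    rw [hνx]; exact mul_ne_zero (mul_ne_zero two_ne_zero hκc) hz0
  have hνre : ν.re = 2*κ := by
    have : ν = (((2*κ:ℝ)):ℂ) - (((2*κ*x:ℝ)):ℂ) * Complex.I := by
      rw [hνx, hzdef]; push_cast; ring
    rw [this]; simp
  have hνrepos : 0 < ν.re := by rw [hνre]; linarith
  -- the remainder function r
  have hr : ∀ y : ℝ, |Real.exp (-(y^2)) - 1 + y^2| ≤ y^4/2 := by
    intro y
    have h1 := Real.add_one_le_exp (-(y^2))
    have h2 := expq (sq_nonneg y)
    rw [abs_le]
    constructor <;> nlinarith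
  -- split the integrand
  have hg : ∀ y : ℝ, Complex.exp (-(y:ℂ)^2 - ν*y)
      = Complex.exp (-(ν*y)) - (y:ℂ)^2 * Complex.exp (-(ν*y))
        + ((Real.exp (-(y^2)) - 1 + y^2 : ℝ) : ℂ) * Complex.exp (-(ν*y)) := by
    intro y
    have hsplit : -(y:ℂ)^2 - ν*y = ((-(y^2):ℝ):ℂ) + (-(ν*y)) := by push_cast; ring
    rw [hsplit, Complex.exp_add, ← Complex.ofReal_exp]
    push_cast
    ring
  set E : ℂ := ∫ y in Ioi (0:ℝ),
    ((Real.exp (-(y^2)) - 1 + y^2 : ℝ) : ℂ) * Complex.exp (-(ν*y)) with hEdef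
  -- integrability of the remainder integrand
  have hcont : Continuous fun y : ℝ =>
      ((Real.exp (-(y^2)) - 1 + y^2 : ℝ) : ℂ) * Complex.exp (-(ν*y)) := by fun_prop
  have hnorm : ∀ y : ℝ, 0 < y →
      ‖((Real.exp (-(y^2)) - 1 + y^2 : ℝ) : ℂ) * Complex.exp (-(ν*y))‖
        ≤ y^4/2 * Real.exp (-(2*κ)*y) := by
    intro y hy
    rw [norm_mul, Complex.norm_real, Real.norm_eq_abs,
      Complex.norm_exp]
    have hre : (-(ν*(y:ℂ))).re = -(2*κ)*y := by
      simp [Complex.mul_re, hνre]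
    rw [hre]
    exact mul_le_mul_of_nonneg_right (hr y) (le_of_lt (Real.exp_pos _))
  have hEint : IntegrableOn (fun y : ℝ =>
      ((Real.exp (-(y^2)) - 1 + y^2 : ℝ) : ℂ) * Complex.exp (-(ν*y))) (Ioi 0) := by
    apply Integrable.mono' (g := fun y : ℝ => y^4 * Real.exp (-(2*κ)*y))
      (integrableOn_pme 4 (by linarith))
    · exact hcont.aestronglyMeasurable.restrict
    · filter_upwards [ae_restrict_mem measurableSet_Ioi] with y hy
      refine le_trans (hnorm y hy) ?_
      have := Real.exp_pos (-(2*κ)*y)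
      nlinarith [pow_nonneg (le_of_lt (mem_Ioi.mp hy)) 4]
  -- the integral identity
  have hi0 : IntegrableOn (fun y : ℝ => Complex.exp (-(ν*y))) (Ioi 0) := by
    have := integrableOn_cpme ν hνrepos 0
    simpa using this
  have hi2 : IntegrableOn (fun y : ℝ => (y:ℂ)^2 * Complex.exp (-(ν*y))) (Ioi 0) :=
    integrableOn_cpme ν hνrepos 2
  have hint : (∫ y in Ioi (0:ℝ), Complex.exp (-(y:ℂ)^2 - ν*y)) = 1/ν - 2/ν^3 + E := by
    rw [setIntegral_congr_fun measurableSet_Ioi (fun y _ => hg y)]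
    have hsub : IntegrableOn (fun y : ℝ => Complex.exp (-(ν*y))
        - (y:ℂ)^2 * Complex.exp (-(ν*y))) (Ioi 0) := hi0.sub hi2
    rw [integral_add hsub hEint, integral_sub hi0 hi2, lap0 ν hνrepos, lap2 ν hνrepos]
  -- bound on E
  have hEbound : ‖E‖ ≤ 3/(8*κ^5) := by
    have hb : ∀ᵐ y ∂(volume.restrict (Ioi (0:ℝ))),
        ‖((Real.exp (-(y^2)) - 1 + y^2 : ℝ) : ℂ) * Complex.exp (-(ν*y))‖
          ≤ y^4/2 * Real.exp (-(2*κ)*y) := by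
      filter_upwards [ae_restrict_mem measurableSet_Ioi] with y hy
      exact hnorm y hy
    have hgint : Integrable (fun y : ℝ => y^4/2 * Real.exp (-(2*κ)*y))
        (volume.restrict (Ioi (0:ℝ))) := by
      have := (integrableOn_pme 4 (by linarith : (0:ℝ) < 2*κ)).const_mul (1/2 : ℝ)
      refine this.congr (by filter_upwards [] with y; ring)
    have := norm_integral_le_of_norm_le hgint hb
    rw [hEdef]
    refine le_trans this ?_
    have hval : ∫ y in Ioi (0:ℝ), y^4/2 * Real.exp (-(2*κ)*y) = 3/(8*κ^5) := by
      have h24 : ∫ y in Ioi (0:ℝ), y^4 * Real.exp (-((2*κ)*y)) = 24/(2*κ)^5 :=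
        int_pow4 (by linarith)
      have hcongr : ∫ y in Ioi (0:ℝ), y^4/2 * Real.exp (-(2*κ)*y)
          = (1/2 : ℝ) * ∫ y in Ioi (0:ℝ), y^4 * Real.exp (-((2*κ)*y)) := by
        rw [← integral_const_mul]
        refine setIntegral_congr_fun measurableSet_Ioi fun y _ => ?_
        rw [neg_mul]
        ring
      rw [hcongr, h24]
      field_simp
      ring
    rw [hval]
  -- exponential factor
  set w : ℂ := -(Complex.I * (x:ℂ)) with hwdef
  have hexpfac : -(Complex.I * (u:ℂ))/(κ:ℂ) = w := by
    rw [hwdef, hu_c]; field_simp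
  have habsw : ‖w‖ = |x| := by
    rw [hwdef]; simp
  have habsexp : ‖Complex.exp w‖ = 1 := by
    rw [Complex.norm_exp]
    have : w.re = 0 := by rw [hwdef]; simp
    rw [this, Real.exp_zero]
  -- main decomposition
  set A : ℂ := Complex.exp w / z - (1 - (x:ℂ)^2/2) with hAdef
  set B : ℂ := 1/(2*(κ:ℂ)^2) - Complex.exp w / (2*(κ:ℂ)^2*z^3) with hBdef
  set C : ℂ := 2*(κ:ℂ)*Complex.exp w * E with hCdef
  have hmain : (2 * (κ : ℂ)) * Complex.exp (-(Complex.I * u) / κ) *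
        (∫ y in Set.Ioi (0 : ℝ), Complex.exp (-(y : ℂ) ^ 2 - ν * y)) -
        ((1 : ℂ) - ((u : ℂ) ^ 2 + 1) / (2 * (κ : ℂ) ^ 2)) = A + B + C := by
    have h1 : 2*(κ:ℂ)*Complex.exp w * (1/(2*(κ:ℂ)*z)) = Complex.exp w / z := by
      field_simp
    have h2 : 2*(κ:ℂ)*Complex.exp w * (2/(2*(κ:ℂ)*z)^3)
        = Complex.exp w / (2*(κ:ℂ)^2*z^3) := by
      field_simp
    have h3 : (((κ:ℂ)*(x:ℂ))^2 + 1)/(2*(κ:ℂ)^2) = (x:ℂ)^2/2 + 1/(2*(κ:ℂ)^2) := by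
      field_simp
    rw [hint, hexpfac, hνx, hu_c, mul_add, mul_sub, h1, h2, h3, hAdef, hBdef, hCdef]
    ring
  rw [hmain]
  -- estimate A
  have hA : ‖A‖ ≤ (13/18) * |x|^3 := by
    have hAeq : A = ((Complex.exp w - (1 + w + w^2/2)) - Complex.I*(x:ℂ)^3/2)/z := by
      rw [eq_div_iff hz0, hAdef, sub_mul, div_mul_cancel₀ _ hz0, hwdef, hzdef]
      linear_combination ((x:ℂ)^2/2) * Complex.I_sq
    have hw1 : ‖w‖ ≤ 1 := by rw [habsw]; exact hx1
    have hexp3 := Complex.exp_bound hw1 (n := 3) (by norm_num)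
    have hsum : ∑ m ∈ Finset.range 3, w^m/(m.factorial) = 1 + w + w^2/2 := by
      rw [Finset.sum_range_succ, Finset.sum_range_succ, Finset.sum_range_succ]
      norm_num
    rw [hsum] at hexp3
    have hb1 : ‖Complex.exp w - (1 + w + w^2/2)‖ ≤ (2/9) * |x|^3 := by
      refine le_trans hexp3 (le_of_eq ?_)
      rw [habsw]
      norm_num [Nat.factorial]
      try ring
    have hb2 : ‖Complex.I*(x:ℂ)^3/2‖ = |x|^3/2 := by
      rw [norm_div, norm_mul]
      simp
    rw [hAeq, norm_div]
    have hnum : ‖(Complex.exp w - (1 + w + w^2/2)) - Complex.I*(x:ℂ)^3/2‖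
        ≤ (2/9)*|x|^3 + |x|^3/2 := le_trans (norm_sub_le _ _) (by
          rw [hb2]; exact add_le_add_left hb1 _)
    have haz0 : (0:ℝ) < ‖z‖ := lt_of_lt_of_le one_pos haz1
    calc ‖(Complex.exp w - (1 + w + w^2/2)) - Complex.I*(x:ℂ)^3/2‖ / ‖z‖
        ≤ ((2/9)*|x|^3 + |x|^3/2) / 1 := by
          apply div_le_div₀ (by positivity) hnum one_pos haz1
      _ = (13/18) * |x|^3 := by ring
  -- estimate B
  have hB : ‖B‖ ≤ |x| / κ^2 := by
    have hBeq : B = (z^3 - Complex.exp w)/(2*(κ:ℂ)^2*z^3) := by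
      rw [hBdef]
      field_simp
    have hexpw : Complex.exp w = (Real.cos x : ℂ) - (Real.sin x : ℂ) * Complex.I := by
      apply Complex.ext
      · rw [Complex.exp_re]
        have h1 : w.re = 0 := by rw [hwdef]; simp
        have h2 : w.im = -x := by rw [hwdef]; simp
        rw [h1, h2, Real.exp_zero, Real.cos_neg]
        simp [Complex.cos_ofReal_re, Complex.sin_ofReal_re]
      · rw [Complex.exp_im]
        have h1 : w.re = 0 := by rw [hwdef]; simp
        have h2 : w.im = -x := by rw [hwdef]; simp
        rw [h1, h2, Real.exp_zero, Real.sin_neg]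
        simp [Complex.cos_ofReal_re, Complex.sin_ofReal_re]
    have heq : z^3 - Complex.exp w
        = ((1 - 3*x^2 - Real.cos x : ℝ):ℂ) + ((-3*x + x^3 + Real.sin x : ℝ):ℂ)*Complex.I := by
      rw [hexpw, hzdef]
      push_cast
      linear_combination (3*(x:ℂ)^2 - (x:ℂ)^3*Complex.I) * Complex.I_sq
    have hnumsq : (‖z^3 - Complex.exp w‖)^2 ≤ (2 * |x| * (‖z‖)^3)^2 := by
      rw [Complex.sq_norm, heq, Complex.normSq_add_mul_I]
      have := N_bound hx1
      calc (1 - 3*x^2 - Real.cos x)^2 + (-3*x + x^3 + Real.sin x)^2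
          ≤ 4*x^2*(1+x^2)^3 := this
        _ = (2 * |x| * (‖z‖)^3)^2 := by
            rw [← hazsq, ← sq_abs x]
            ring
    have hnum : ‖z^3 - Complex.exp w‖ ≤ 2 * |x| * (‖z‖)^3 := by
      have h1 : (0:ℝ) ≤ ‖z^3 - Complex.exp w‖ := norm_nonneg _
      have h2 : (0:ℝ) ≤ 2 * |x| * (‖z‖)^3 := by positivity
      nlinarith
    rw [hBeq, norm_div]
    have hden : ‖2*(κ:ℂ)^2*z^3‖ = 2*κ^2*(‖z‖)^3 := by
      rw [norm_mul, norm_mul, norm_pow, norm_pow, Complex.norm_two, Complex.norm_real,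
        Real.norm_eq_abs, abs_of_pos hκ0]
    rw [hden]
    have haz0 : (0:ℝ) < ‖z‖ := lt_of_lt_of_le one_pos haz1
    calc ‖z^3 - Complex.exp w‖ / (2*κ^2*(‖z‖)^3)
        ≤ (2 * |x| * (‖z‖)^3) / (2*κ^2*(‖z‖)^3) := by
          gcongr
      _ = |x| / κ^2 := by
          field_simp
  -- estimate C
  have hC : ‖C‖ ≤ 3/(4*κ^4) := by
    rw [hCdef, norm_mul, norm_mul, norm_mul, habsexp, Complex.norm_two, Complex.norm_real,
      Real.norm_eq_abs, abs_of_pos hκ0, mul_one]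
    calc 2*κ*‖E‖ ≤ 2*κ*(3/(8*κ^5)) := by
          exact mul_le_mul_of_nonneg_left hEbound (by positivity)
      _ = 3/(4*κ^4) := by field_simp; ring
  -- constants
  have hrp0' : (0:ℝ) < κ ^ (3*θ-3) := Real.rpow_pos_of_pos hκ0 _
  have hC2 : (7:ℝ)/2 ≤ C2 κ θ := by
    rw [C2]
    have h4 : 0 < 1 - κ^(θ-1)/4 := by linarith
    have h1 : (1:ℝ) ≤ 1/(1-κ^(θ-1)) := by
      rw [le_div_iff₀ (by linarith)]; linarith
    have h2 : (1:ℝ) ≤ 1/(1-κ^(θ-1)/4) := by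
      rw [le_div_iff₀ h4]; linarith
    nlinarith
  have hC3 : (1:ℝ) ≤ C3 κ θ := by
    rw [C3]
    have hp : (0:ℝ) < κ ^ (2*θ-2) := Real.rpow_pos_of_pos hκ0 _
    have h := Real.sqrt_le_sqrt (show (1:ℝ) ≤ 1 + κ ^ (2*θ-2)/4 by linarith)
    rwa [Real.sqrt_one] at h
  have hC41 : (1:ℝ) ≤ C41 κ θ := by
    rw [C41]
    have hprod : 0 ≤ κ ^ (3*θ-3) * C2 κ θ * C3 κ θ :=
      mul_nonneg (mul_nonneg (le_of_lt hrp0') (by linarith : (0:ℝ) ≤ C2 κ θ))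
        (by linarith : (0:ℝ) ≤ C3 κ θ)
    linarith
  have hC42 : (13:ℝ)/18 ≤ C42 κ θ := by
    rw [C42]
    have hκ2 : (1:ℝ) ≤ κ^(2:ℕ) := by nlinarith
    have h5 : 1/(2*κ^(2:ℕ)) ≤ 1/2 := by
      rw [div_le_div_iff₀ (by positivity) (by norm_num)]
      nlinarith
    have h6 : (0:ℝ) < 1 - 1/(2*κ^(2:ℕ)) := by
      have : 0 < 1/(2*κ^(2:ℕ)) := by positivity
      linarith
    nlinarith
  have hC1 : 3/(4*κ) ≤ C1 κ θ := by
    rw [C1]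
    have hs1 : (0:ℝ) ≤ Real.sqrt (1 + κ ^ (2*θ-2)) := Real.sqrt_nonneg _
    have hs2 : (0:ℝ) ≤ 2 * Real.sqrt Real.pi * Real.sqrt (1 + κ ^ (2*θ-2)) / Real.exp 1 := by
      positivity
    have hs3 : (0:ℝ) ≤ Real.sqrt (1 + κ ^ (2*θ-2)) / Real.exp 1 := by positivity
    have hs4 : (0:ℝ) < 6/κ := by positivity
    have hs5 : (0:ℝ) < 3/κ^(3:ℕ) := by positivity
    have h64 : 6/κ*1 ≤ 6/κ*(1 + Real.sqrt (1 + κ ^ (2*θ-2)) / Real.exp 1) :=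
      mul_le_mul_of_nonneg_left (by linarith) (le_of_lt hs4)
    have e1 : (1:ℝ)/8*(6/κ) = 3/(4*κ) := by ring
    linarith
  -- final assembly
  have htri : ‖A + B + C‖ ≤ ‖A‖ + ‖B‖ + ‖C‖ :=
    le_trans (norm_add_le _ _) (add_le_add_left (norm_add_le _ _) _)
  refine le_trans htri ?_
  have hsum : ‖A‖ + ‖B‖ + ‖C‖
      ≤ (13/18)*|x|^3 + |x|/κ^2 + 3/(4*κ^4) := by
    exact add_le_add (add_le_add hA hB) hC
  refine le_trans hsum ?_
  rw [Cfun, hxabs, le_div_iff₀ (show (0:ℝ) < κ^(3:ℕ) by positivity)]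
  have hexpand : ((13:ℝ)/18*(|u|/κ)^3 + (|u|/κ)/κ^2 + 3/(4*κ^4)) * κ^(3:ℕ)
      = 13/18*|u|^3 + |u| + 3/(4*κ) := by
    field_simp
  rw [hexpand]
  have h1 : 13/18*|u|^3 ≤ C42 κ θ * |u|^(3:ℕ) := by
    nlinarith [pow_nonneg (abs_nonneg u) 3, hC42]
  have h2 : |u| ≤ C41 κ θ * |u| := by nlinarith [abs_nonneg u, hC41]
  linarith [hC1, h1, h2]
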